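/- arXiv:1310.8216 — 5 statements merged into one kernel-verified Lean document; each statement's English description precedes it below -/
import Mathlib

section
/- For |x| < 1/4, the second derivative of the Catalan generating function satisfies T''(x) = 2 T(x)^5 (2 - x T(x)^2) / (1 - x T(x)^2)^3. -/
open Finset

/-- The generating function of the Catalan numbers, `T(x) = ∑ Cat(k) xᵏ`. -/
noncomputable def catalanGF (x : ℝ) : ℝ := ∑' k : ℕ, (catalan k : ℝ) * x ^ k

lemma catalan_le_four_pow (n : ℕ) : catalan n ≤ 4 ^ n := by
  have h1 : catalan n ≤ n.centralBinom := by
    calc catalan n ≤ (n + 1) * catalan n := Nat.le_mul_of_pos_left _ n.succ_pos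
      _ = n.centralBinom := succ_mul_catalan_eq_centralBinom n
  have h2 : n.centralBinom ≤ 4 ^ n := by
    rw [Nat.centralBinom_eq_two_mul_choose]
    calc (2 * n).choose n ≤ ∑ i ∈ range (2 * n + 1), (2 * n).choose i :=
          Finset.single_le_sum (fun i _ => Nat.zero_le _) (by simp; omega)
      _ = 2 ^ (2 * n) := Nat.sum_range_choose (2 * n)
      _ = 4 ^ n := by rw [pow_mul]; norm_num
  omega

lemma summable_norm_catalan {y : ℝ} (hy : |y| < 1/4) :
    Summable (fun k : ℕ => ‖(catalan k : ℝ) * y ^ k‖) := by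
  have h4 : (4 : ℝ) * |y| < 1 := by linarith
  apply Summable.of_nonneg_of_le (fun k => norm_nonneg _) (fun k => ?_)
    (summable_geometric_of_lt_one (by positivity) h4)
  rw [norm_mul, norm_pow, Real.norm_natCast, Real.norm_eq_abs, mul_pow]
  gcongr
  · exact_mod_cast catalan_le_four_pow k

lemma summable_catalan {y : ℝ} (hy : |y| < 1/4) :
    Summable (fun k : ℕ => (catalan k : ℝ) * y ^ k) :=
  (summable_norm_catalan hy).of_norm

lemma catalanGF_quadratic {y : ℝ} (hy : |y| < 1/4) :
    y * catalanGF y ^ 2 - catalanGF y + 1 = 0 := by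
  have hn := summable_norm_catalan hy
  have hs := summable_catalan hy
  have hmul : catalanGF y * catalanGF y = ∑' n : ℕ, (catalan (n + 1) : ℝ) * y ^ n := by
    rw [catalanGF, tsum_mul_tsum_eq_tsum_sum_antidiagonal_of_summable_norm hn hn]
    congr 1; funext n
    rw [catalan_succ']
    push_cast
    rw [Finset.sum_mul]
    apply Finset.sum_congr rfl
    intro ij hij
    have h := Finset.HasAntidiagonal.mem_antidiagonal.mp hij
    rw [← h]; ring
  have h0 : catalanGF y = 1 + ∑' n : ℕ, (catalan (n + 1) : ℝ) * y ^ (n + 1) := by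
    rw [catalanGF, Summable.tsum_eq_zero_add hs]; simp
  have hxT : y * catalanGF y ^ 2 = catalanGF y - 1 := by
    calc y * catalanGF y ^ 2 = y * ∑' n : ℕ, (catalan (n + 1) : ℝ) * y ^ n := by
          rw [sq, hmul]
      _ = ∑' n : ℕ, (catalan (n + 1) : ℝ) * y ^ (n + 1) := by
          rw [← tsum_mul_left]; congr 1; funext n; ring
      _ = catalanGF y - 1 := by rw [h0]; ring
  linarith

lemma hasDerivAt_catalanGF_tsum {y : ℝ} (hy : |y| < 1/4) :
    HasDerivAt catalanGF (∑' k : ℕ, (catalan k : ℝ) * ((k : ℝ) * y ^ (k - 1))) y := by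
  set r : ℝ := 1/8 + |y| / 2 with hr
  have hr0 : 0 < r := by positivity
  have hr4 : r < 1/4 := by rw [hr]; linarith
  have hyr : |y| < r := by rw [hr]; linarith
  have h4r : |4 * r| < 1 := by
    rw [abs_of_pos (by positivity), hr]; linarith
  have hu : Summable (fun k : ℕ => (1 / r) * ((k : ℝ) ^ 1 * (4 * r) ^ k)) :=
    (summable_pow_mul_geometric_of_norm_lt_one (R := ℝ) 1 (by rwa [Real.norm_eq_abs])).mul_left _
  have hbound : ∀ (k : ℕ), ∀ z ∈ Set.Ioo (-r) r,
      ‖(catalan k : ℝ) * ((k : ℝ) * z ^ (k - 1))‖ ≤ 1 / r * ((k : ℝ) ^ 1 * (4 * r) ^ k) := by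
    intro k z hz
    have hzr : |z| ≤ r := le_of_lt (abs_lt.mpr ⟨hz.1, hz.2⟩)
    rw [norm_mul, norm_mul, norm_pow, Real.norm_natCast, Real.norm_natCast, Real.norm_eq_abs]
    rcases Nat.eq_zero_or_pos k with hk | hk
    · subst hk
      simp
    · have hck : (catalan k : ℝ) ≤ 4 ^ k := by
        exact_mod_cast catalan_le_four_pow k
      have hzk : |z| ^ (k - 1) ≤ r ^ (k - 1) := by
        gcongr

      calc (catalan k : ℝ) * ((k : ℝ) * |z| ^ (k - 1))
          ≤ 4 ^ k * ((k : ℝ) * r ^ (k - 1)) := by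
            apply mul_le_mul hck _ (by positivity) (by positivity)
            exact mul_le_mul_of_nonneg_left hzk (by positivity)
        _ = 1 / r * ((k : ℝ) ^ 1 * (4 * r) ^ k) := by
            rw [mul_pow]
            have hrr : r ^ k = r * r ^ (k - 1) := by
              rw [← pow_succ']
              congr 1
              omega
            rw [hrr]
            field_simp
  exact hasDerivAt_tsum_of_isPreconnected hu (isOpen_Ioo (a := -r) (b := r))
    (isPreconnected_Ioo)
    (fun k z _ => (hasDerivAt_pow k z).const_mul _)
    hbound ⟨neg_lt_of_abs_lt hyr, lt_of_abs_lt hyr⟩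
    (summable_catalan hy) ⟨neg_lt_of_abs_lt hyr, lt_of_abs_lt hyr⟩

lemma hasDerivAt_catalanGF {y : ℝ} (hy : |y| < 1/4) :
    HasDerivAt catalanGF (catalanGF y ^ 2 / (1 - 2 * y * catalanGF y)) y := by
  have hT := hasDerivAt_catalanGF_tsum hy
  set d := ∑' k : ℕ, (catalan k : ℝ) * ((k : ℝ) * y ^ (k - 1)) with hd
  set T := catalanGF y with hTdef
  have hq := catalanGF_quadratic hy
  rw [← hTdef] at hq
  -- derivative of the identically-zero function z ↦ z T(z)² - T(z) + 1
  have hg : HasDerivAt (fun z => z * catalanGF z ^ 2 - catalanGF z + 1)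
      (T ^ 2 + 2 * y * T * d - d) y := by
    have h := (((hasDerivAt_id y).mul (hT.pow 2)).sub hT).add_const 1
    refine h.congr_deriv (Eq.symm ?_)
    simp [hTdef]
    ring
  have hnbhd : ∀ᶠ z in nhds y, |z| < 1/4 := by
    have hmem : Set.Ioo (-(1/4) : ℝ) (1/4) ∈ nhds y := by
      apply Ioo_mem_nhds
      · linarith [(abs_lt.mp hy).1]
      · exact lt_of_abs_lt hy
    filter_upwards [hmem] with z hz
    exact abs_lt.mpr ⟨hz.1, hz.2⟩
  have hzero : HasDerivAt (fun z => z * catalanGF z ^ 2 - catalanGF z + 1) 0 y := by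
    apply (hasDerivAt_const y (0 : ℝ)).congr_of_eventuallyEq
    filter_upwards [hnbhd] with z hz
    exact catalanGF_quadratic hz
  have heq : T ^ 2 + 2 * y * T * d - d = 0 := hg.unique hzero
  have hden : 1 - 2 * y * T ≠ 0 := by
    have hsq : (1 - 2 * y * T) ^ 2 = 1 - 4 * y := by nlinarith [hq]
    intro h
    rw [h] at hsq
    simp at hsq
    have := (abs_lt.mp hy).2
    linarith
  have hdval : d = T ^ 2 / (1 - 2 * y * T) := by
    rw [eq_div_iff hden]
    nlinarith [heq]
  rw [← hdval]
  exact hT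

/-- For `|x| < 1/4`, the second derivative of the Catalan generating function satisfies
`T''(x) = 2 T(x)⁵ (2 - x T(x)²) / (1 - x T(x)²)³`. -/
theorem hasDerivAt_deriv_catalanGF (x : ℝ) (hx : |x| < 1/4) :
    HasDerivAt (deriv catalanGF)
      (2 * catalanGF x ^ 5 * (2 - x * catalanGF x ^ 2) / (1 - x * catalanGF x ^ 2) ^ 3) x := by
  set T := catalanGF x with hTdef
  have hq := catalanGF_quadratic hx
  rw [← hTdef] at hq
  have hKx := hasDerivAt_catalanGF hx
  set dT := T ^ 2 / (1 - 2 * x * T) with hdT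
  -- nonvanishing facts
  have hden : 1 - 2 * x * T ≠ 0 := by
    have hsq : (1 - 2 * x * T) ^ 2 = 1 - 4 * x := by nlinarith [hq]
    intro h
    rw [h] at hsq
    simp at hsq
    have := (abs_lt.mp hx).2
    linarith
  have hT0 : T ≠ 0 := by
    intro h
    rw [h] at hq
    simp at hq
  have hc : T * (1 - 2 * x * T) = 2 - T := by linear_combination (-2 : ℝ) * hq
  have h2T : (2 : ℝ) - T ≠ 0 := by rw [← hc]; exact mul_ne_zero hT0 hden
  -- F is the local formula for deriv catalanGF
  have hF : HasDerivAt (fun z => catalanGF z ^ 2 / (1 - 2 * z * catalanGF z))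
      ((2 * T ^ 1 * dT * (1 - 2 * x * T) - T ^ 2 * (0 - (2 * T + 2 * x * dT))) /
        (1 - 2 * x * T) ^ 2) x := by
    have hN : HasDerivAt (fun z => catalanGF z ^ 2) (2 * T ^ 1 * dT) x := hKx.pow 2
    have hDn : HasDerivAt (fun z => 1 - 2 * z * catalanGF z) (0 - (2 * T + 2 * x * dT)) x := by
      have h1 : HasDerivAt (fun z => 2 * z * catalanGF z) (2 * T + 2 * x * dT) x := by
        have := ((hasDerivAt_id x).const_mul (2 : ℝ)).mul hKx
        exact this.congr_deriv (by simp; ring)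
      exact (hasDerivAt_const x (1 : ℝ)).sub h1
    exact hN.div hDn hden
  have hnbhd : ∀ᶠ z in nhds x, |z| < 1/4 := by
    have hmem : Set.Ioo (-(1/4) : ℝ) (1/4) ∈ nhds x := by
      apply Ioo_mem_nhds
      · linarith [(abs_lt.mp hx).1]
      · exact lt_of_abs_lt hx
    filter_upwards [hmem] with z hz
    exact abs_lt.mpr ⟨hz.1, hz.2⟩
  have heq : deriv catalanGF =ᶠ[nhds x] fun z => catalanGF z ^ 2 / (1 - 2 * z * catalanGF z) := by
    filter_upwards [hnbhd] with z hz
    exact (hasDerivAt_catalanGF hz).deriv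
  have hfinal := hF.congr_of_eventuallyEq heq
  refine hfinal.congr_deriv (Eq.symm ?_)
  rw [hdT]
  have he1 : 1 - x * T ^ 2 = 2 - T := by linarith
  have he2 : 2 - x * T ^ 2 = 3 - T := by linarith
  rw [he1, he2, ← hc]
  field_simp [show 1 - 2 * T * x ≠ 0 by rwa [mul_right_comm] at hden]
  linear_combination 6 * hq
end

section
/- The sequence a_k defined by a_0 = 1 and, for k \ge 1, a_k = \sum_{l=1}^{k} \sum_{k_1 + \cdots + k_l = k - l} a_{k_1} \cdots a_{k_l} (sum over nonnegative integers k_1,...,k_l) equals the Catalan numbers: a_k = Cat(k) for all k \ge 0. -/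
open Finset Finset.Nat

/-- Sum of products of Catalan numbers over tuples of length `l` summing to `m`. -/
private def S (l m : ℕ) : ℕ := ∑ t ∈ antidiagonalTuple l m, ∏ i, catalan (t i)

private lemma S_one (m : ℕ) : S 1 m = catalan m := by
  simp [S, antidiagonalTuple_one]

private lemma sum_tuple_succ {M : Type*} [AddCommMonoid M] (k n : ℕ)
    (f : (Fin (k + 1) → ℕ) → M) :
    ∑ t ∈ antidiagonalTuple (k + 1) n, f t
      = ∑ ij ∈ Finset.HasAntidiagonal.antidiagonal n, ∑ x ∈ antidiagonalTuple k ij.2, f (Fin.cons ij.1 x) := by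
  rw [Finset.sum_sigma']
  refine Finset.sum_nbij' (j := fun p => Fin.cons p.1.1 p.2)
    (i := fun t => ⟨(t 0, ∑ i, Fin.tail t i), Fin.tail t⟩) ?_ ?_ ?_ ?_ ?_
  · intro t ht
    simp only [mem_antidiagonalTuple, Fin.sum_univ_succ] at ht
    simp only [Finset.mem_sigma, Finset.HasAntidiagonal.mem_antidiagonal, mem_antidiagonalTuple]
    exact ⟨ht, trivial⟩
  · rintro ⟨⟨x, y⟩, g⟩ hp
    simp only [Finset.mem_sigma, Finset.HasAntidiagonal.mem_antidiagonal, mem_antidiagonalTuple] at hp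
    simp only [mem_antidiagonalTuple, Fin.sum_cons]
    rw [hp.2, hp.1]
  · intro t _
    exact Fin.cons_self_tail t
  · rintro ⟨⟨x, y⟩, g⟩ hp
    simp only [Finset.mem_sigma, Finset.HasAntidiagonal.mem_antidiagonal, mem_antidiagonalTuple] at hp
    obtain ⟨h1, h2⟩ := hp
    subst h2
    simp [Fin.tail_cons, Fin.cons_zero]
  · intro t _
    rw [Fin.cons_self_tail t]

private lemma S_succ (l m : ℕ) :
    S (l + 1) m = ∑ ij ∈ Finset.HasAntidiagonal.antidiagonal m, catalan ij.1 * S l ij.2 := by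
  rw [S, sum_tuple_succ]
  refine Finset.sum_congr rfl fun ij _ => ?_
  rw [S, Finset.mul_sum]
  refine Finset.sum_congr rfl fun x _ => ?_
  rw [Fin.prod_univ_succ]
  simp

private lemma triangle_swap {M : Type*} [AddCommMonoid M] (n : ℕ) (h : ℕ → ℕ → M) :
    ∑ l ∈ range n, ∑ i ∈ range (n - l), h l i
      = ∑ i ∈ range n, ∑ l ∈ range (n - i), h l i := by
  rw [← Finset.sum_range_diag_flip n (fun k m => h k m),
    ← Finset.sum_range_diag_flip n (fun k m => h m k)]
  refine Finset.sum_congr rfl fun m _ => ?_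
  rw [← Finset.sum_range_reflect (fun k => h k (m - k)) (m + 1)]
  refine Finset.sum_congr rfl fun k hk => ?_
  simp only [Finset.mem_range] at hk
  congr 1 <;> omega

private lemma key : ∀ n : ℕ, ∑ l ∈ range (n + 1), S (l + 1) (n - l) = catalan (n + 1) := by
  intro n
  induction n using Nat.strong_induction_on with
  | _ n ih =>
    rw [Finset.sum_range_succ']
    have h0 : S (0 + 1) (n - 0) = catalan n := by rw [Nat.sub_zero, S_one]
    rw [h0]
    have hstep : ∀ l ∈ range n,
        S (l + 1 + 1) (n - (l + 1)) = ∑ i ∈ range (n - l), catalan i * S (l + 1) (n - (l + 1) - i) := by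
      intro l hl
      simp only [Finset.mem_range] at hl
      rw [S_succ, Finset.Nat.sum_antidiagonal_eq_sum_range_succ_mk]
      have h : (n - (l + 1)).succ = n - l := by omega
      rw [h]
    rw [Finset.sum_congr rfl hstep, triangle_swap]
    have hinner : ∀ i ∈ range n,
        ∑ l ∈ range (n - i), catalan i * S (l + 1) (n - (l + 1) - i)
          = catalan i * catalan (n - i) := by
      intro i hi
      simp only [Finset.mem_range] at hi
      rw [← Finset.mul_sum]
      congr 1
      have h1 : catalan (n - i) = ∑ l ∈ range ((n - 1 - i) + 1), S (l + 1) ((n - 1 - i) - l) := by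
        rw [ih (n - 1 - i) (by omega)]
        congr 1
        omega
      rw [h1, show (n - 1 - i) + 1 = n - i by omega]
      refine Finset.sum_congr rfl fun l _ => ?_
      congr 1
      omega
    rw [Finset.sum_congr rfl hinner]
    rw [catalan_succ', Finset.Nat.sum_antidiagonal_eq_sum_range_succ_mk,
      Finset.sum_range_succ]
    simp

/-- The sequence defined by `a 0 = 1` and
`a k = ∑_{l=1}^{k} ∑_{k₁+⋯+k_l = k-l} a k₁ ⋯ a k_l` for `k ≥ 1`
equals the sequence of Catalan numbers. -/
theorem catalan_of_recursion (a : ℕ → ℕ) (h0 : a 0 = 1)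
    (hrec : ∀ k, 1 ≤ k →
      a k = ∑ l ∈ Finset.Icc 1 k, ∑ t ∈ Finset.Nat.antidiagonalTuple l (k - l), ∏ i, a (t i)) :
    ∀ k, a k = catalan k := by
  intro k
  induction k using Nat.strong_induction_on with
  | _ k ih =>
    match k with
    | 0 => simpa using h0
    | (n + 1) =>
      rw [hrec (n + 1) (Nat.succ_le_succ (Nat.zero_le n))]
      have hterm : ∀ l ∈ Finset.Icc 1 (n + 1),
          (∑ t ∈ Finset.Nat.antidiagonalTuple l (n + 1 - l), ∏ i, a (t i)) = S l (n + 1 - l) := by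
        intro l hl
        simp only [Finset.mem_Icc] at hl
        refine Finset.sum_congr rfl fun t ht => ?_
        rw [mem_antidiagonalTuple] at ht
        refine Finset.prod_congr rfl fun i _ => ?_
        apply ih
        have hle : t i ≤ n + 1 - l := ht ▸ Finset.single_le_sum (fun j _ => Nat.zero_le (t j))
          (Finset.mem_univ i)
        omega
      rw [Finset.sum_congr rfl hterm]
      have : Finset.Icc 1 (n + 1) = Finset.Ico 1 (n + 2) := by
        rw [← Finset.Ico_add_one_right_eq_Icc]; rfl
      rw [this, Finset.sum_Ico_eq_sum_range]
      have h2 : n + 2 - 1 = n + 1 := rfl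
      rw [h2, ← key n]
      refine Finset.sum_congr rfl fun l _ => ?_
      congr 1 <;> omega
end

section
/- For the signed measure \sigma^{(1)} with density f(x) = (1/(2\pi)) (x^4 - 4x^2 + 2)/sqrt(4-x^2) on [-2,2], the 2k-th moment \int_{-2}^{2} x^{2k} f(x) dx equals \sum_{p_1+p_2+p_3+p_4=k-2} (2p_1+1) Cat(p_1) Cat(p_2) Cat(p_3) Cat(p_4), and all odd moments vanish. -/
section Comb
open Finset Finset.Nat



lemma adT_succ_eq (k n : ℕ) :
    antidiagonalTuple (k+1) n
      = (antidiagonal n).biUnion fun p =>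
          (antidiagonalTuple k p.2).map ⟨Fin.cons p.1, Fin.cons_right_injective (α := fun _ => ℕ) p.1⟩ := by
  ext x
  simp only [mem_antidiagonalTuple, mem_biUnion, mem_map, Function.Embedding.coeFn_mk,
    Finset.HasAntidiagonal.mem_antidiagonal]
  constructor
  · intro hx
    refine ⟨(x 0, ∑ i, Fin.tail x i), ?_, Fin.tail x, rfl, Fin.cons_self_tail x⟩
    rw [← hx, Fin.sum_univ_succ]; rfl
  · rintro ⟨p, hp, t, ht, rfl⟩
    rw [Fin.sum_cons, ht, hp]

lemma adT_succ_sum {M : Type*} [AddCommMonoid M] (k n : ℕ) (f : (Fin (k+1) → ℕ) → M) :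
    ∑ t ∈ antidiagonalTuple (k+1) n, f t
      = ∑ p ∈ antidiagonal n, ∑ t ∈ antidiagonalTuple k p.2, f (Fin.cons p.1 t) := by
  rw [adT_succ_eq, Finset.sum_biUnion]
  · exact Finset.sum_congr rfl fun p _ => Finset.sum_map _ _ _
  · intro p hp q hq hpq
    simp only [Finset.disjoint_left, Finset.mem_map, Function.Embedding.coeFn_mk]
    rintro a ⟨t, ht, rfl⟩ ⟨u, hu, hcons⟩
    apply hpq
    have h0 : p.1 = q.1 := by
      have := congrFun hcons 0
      simpa using this.symm
    have : p.2 = q.2 := by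
      simp only [Finset.mem_coe, Finset.HasAntidiagonal.mem_antidiagonal] at hp hq
      omega
    exact Prod.ext h0 this


noncomputable def Bc (n : ℕ) : ℝ := (Nat.centralBinom n : ℝ)
noncomputable def Cc (n : ℕ) : ℝ := (catalan n : ℝ)

lemma Bc_succ (n : ℕ) : Bc (n+1) = 4 * Bc n - 2 * Cc n := by
  have hn : ((n : ℝ) + 1) ≠ 0 := by positivity
  apply mul_left_cancel₀ hn
  have h1 : ((n : ℝ) + 1) * Bc (n+1) = 2 * (2 * n + 1) * Bc n := by
    have := Nat.succ_mul_centralBinom_succ n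
    unfold Bc; exact_mod_cast congrArg (Nat.cast : ℕ → ℝ) this
  have h2 : ((n : ℝ) + 1) * Cc n = Bc n := by
    have := succ_mul_catalan_eq_centralBinom n
    unfold Bc Cc; exact_mod_cast congrArg (Nat.cast : ℕ → ℝ) this
  linear_combination h1 + 2 * h2

lemma weight_eq (n : ℕ) : 2 * (2 * (n : ℝ) + 1) * Cc n = Bc (n+1) := by
  have hn : ((n : ℝ) + 1) ≠ 0 := by positivity
  apply mul_left_cancel₀ hn
  have h1 : ((n : ℝ) + 1) * Bc (n+1) = 2 * (2 * n + 1) * Bc n := by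
    have := Nat.succ_mul_centralBinom_succ n
    unfold Bc; exact_mod_cast congrArg (Nat.cast : ℕ → ℝ) this
  have h2 : ((n : ℝ) + 1) * Cc n = Bc n := by
    have := succ_mul_catalan_eq_centralBinom n
    unfold Bc Cc; exact_mod_cast congrArg (Nat.cast : ℕ → ℝ) this
  linear_combination 2 * (2 * (n : ℝ) + 1) * h2 - h1

lemma Bc0 : Bc 0 = 1 := by simp [Bc, Nat.centralBinom]
lemma Cc0 : Cc 0 = 1 := by simp [Cc]
lemma Cc1 : Cc 1 = 1 := by simp [Cc, catalan_one]

lemma conv2 (n : ℕ) : ∑ p ∈ antidiagonal n, Cc p.1 * Cc p.2 = Cc (n+1) := by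
  unfold Cc
  rw [catalan_succ']
  push_cast
  ring

lemma L1 : ∀ n : ℕ, ∑ p ∈ antidiagonal n, Bc p.1 * Cc p.2 = Bc (n+1) / 2 := by
  intro n
  induction n with
  | zero => norm_num [Bc, Cc, Nat.centralBinom]
  | succ n ih =>
    rw [sum_antidiagonal_succ (f := fun p => Bc p.1 * Cc p.2)]
    have hcong : ∑ p ∈ antidiagonal n, Bc (p.1+1) * Cc p.2
        = ∑ p ∈ antidiagonal n, (4 * (Bc p.1 * Cc p.2) - 2 * (Cc p.1 * Cc p.2)) := by
      refine Finset.sum_congr rfl fun p _ => by rw [Bc_succ]; ring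
    rw [hcong, Finset.sum_sub_distrib, ← Finset.mul_sum, ← Finset.mul_sum, ih, conv2,
      Bc_succ (n+1), Bc0]
    ring

lemma Zval (n : ℕ) : ∑ p ∈ antidiagonal n, Bc (p.1+1) * Cc p.2 = Bc (n+2) / 2 - Cc (n+1) := by
  have := L1 (n+1)
  rw [sum_antidiagonal_succ (f := fun p => Bc p.1 * Cc p.2)] at this
  rw [Bc0] at this
  linarith

lemma Xval (n : ℕ) :
    ∑ p ∈ antidiagonal n, Bc (p.1+1) * Cc (p.2+1)
      = Bc (n+3) / 2 - Cc (n+2) - Bc (n+2) := by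
  have := Zval (n+1)
  rw [sum_antidiagonal_succ' (f := fun p => Bc (p.1+1) * Cc p.2)] at this
  rw [Cc0] at this
  linarith

lemma Yval (n : ℕ) :
    ∑ p ∈ antidiagonal n, Bc (p.1+1) * Cc (p.2+2)
      = Bc (n+4) / 2 - Cc (n+3) - Bc (n+3) - Bc (n+2) := by
  have := Xval (n+1)
  rw [sum_antidiagonal_succ' (f := fun p => Bc (p.1+1) * Cc (p.2+1))] at this
  rw [Cc1] at this
  have e : ∀ p : ℕ × ℕ, Bc (p.1+1) * Cc (p.2+1+1) = Bc (p.1+1) * Cc (p.2+2) := by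
    intro p; norm_num
  simp only [e] at this
  linarith

lemma Uval (n : ℕ) : ∑ p ∈ antidiagonal n, Cc p.1 * Cc (p.2+1) = Cc (n+2) - Cc (n+1) := by
  have := conv2 (n+1)
  rw [sum_antidiagonal_succ' (f := fun p => Cc p.1 * Cc p.2)] at this
  rw [Cc0] at this
  linarith

lemma Tval (m : ℕ) :
    ∑ t ∈ antidiagonalTuple 4 m, ((2 * (t 0) + 1 : ℕ) : ℝ) * ∏ i, (catalan (t i) : ℝ)
      = (Bc (m+4) - 4 * Bc (m+3) + 2 * Bc (m+2)) / 2 := by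
  have step : ∑ t ∈ antidiagonalTuple 4 m, ((2 * (t 0) + 1 : ℕ) : ℝ) * ∏ i, (catalan (t i) : ℝ)
      = ∑ p ∈ antidiagonal m, ∑ q ∈ antidiagonal p.2, ∑ r ∈ antidiagonal q.2,
          (2 * (p.1 : ℝ) + 1) * Cc p.1 * (Cc q.1 * (Cc r.1 * Cc r.2)) := by
    rw [adT_succ_sum]
    refine Finset.sum_congr rfl fun p _ => ?_
    rw [adT_succ_sum]
    refine Finset.sum_congr rfl fun q _ => ?_
    rw [adT_succ_sum]
    refine Finset.sum_congr rfl fun r _ => ?_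
    rw [antidiagonalTuple_one, Finset.sum_singleton]
    simp only [Fin.cons_zero, Fin.prod_univ_succ, Fin.cons_succ, Fin.prod_univ_one,
      Matrix.cons_val_zero, Matrix.cons_val_fin_one]
    unfold Cc
    push_cast
    ring
  rw [step]
  have inner : ∀ p : ℕ × ℕ, ∑ q ∈ antidiagonal p.2, ∑ r ∈ antidiagonal q.2,
      (2 * (p.1 : ℝ) + 1) * Cc p.1 * (Cc q.1 * (Cc r.1 * Cc r.2))
      = (2 * (p.1 : ℝ) + 1) * Cc p.1 * (Cc (p.2+2) - Cc (p.2+1)) := by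
    intro p
    have : ∀ q : ℕ × ℕ, ∑ r ∈ antidiagonal q.2,
        (2 * (p.1 : ℝ) + 1) * Cc p.1 * (Cc q.1 * (Cc r.1 * Cc r.2))
        = (2 * (p.1 : ℝ) + 1) * Cc p.1 * (Cc q.1 * Cc (q.2+1)) := by
      intro q
      rw [← Finset.mul_sum, ← Finset.mul_sum, conv2]
    simp only [this]
    rw [← Finset.mul_sum, Uval]
  simp only [inner]
  have outer : ∀ p ∈ antidiagonal m, (2 * (p.1 : ℝ) + 1) * Cc p.1 * (Cc (p.2+2) - Cc (p.2+1))
      = (1/2) * (Bc (p.1+1) * Cc (p.2+2)) - (1/2) * (Bc (p.1+1) * Cc (p.2+1)) := by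
    intro p _
    rw [← weight_eq]
    ring
  rw [Finset.sum_congr rfl outer, Finset.sum_sub_distrib, ← Finset.mul_sum, ← Finset.mul_sum,
    Xval, Yval, Bc_succ (m+3), Bc_succ (m+2)]
  ring



end Comb

section Ana
open Real Set MeasureTheory

lemma sin_image : (fun θ : ℝ => 2 * Real.sin θ) '' Ioo (-(π/2)) (π/2) = Ioo (-2 : ℝ) 2 := by
  ext u
  constructor
  · rintro ⟨θ, hθ, rfl⟩
    have h1 : Real.sin θ < 1 := by
      have := Real.strictMonoOn_sin (Set.mem_Icc.mpr ⟨hθ.1.le, hθ.2.le⟩)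
        (Set.mem_Icc.mpr ⟨by linarith [hθ.1, hθ.2, Real.pi_pos], le_refl (π/2)⟩) hθ.2
      rwa [Real.sin_pi_div_two] at this
    have h2 : -1 < Real.sin θ := by
      have := Real.strictMonoOn_sin
        (Set.mem_Icc.mpr ⟨le_refl (-(π/2)), by linarith [Real.pi_pos]⟩)
        (Set.mem_Icc.mpr ⟨hθ.1.le, hθ.2.le⟩) hθ.1
      rwa [Real.sin_neg, Real.sin_pi_div_two] at this
    exact ⟨by simp only []; linarith, by simp only []; linarith⟩
  · intro hu
    refine ⟨Real.arcsin (u/2), ⟨?_, ?_⟩, ?_⟩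
    · exact Real.neg_pi_div_two_lt_arcsin.mpr (by linarith [hu.1])
    · exact Real.arcsin_lt_pi_div_two.mpr (by linarith [hu.2])
    · show 2 * Real.sin (Real.arcsin (u/2)) = u
      rw [Real.sin_arcsin (by linarith [hu.1]) (by linarith [hu.2])]
      ring

lemma subst_key (g : ℝ → ℝ) :
    ∫ x in Ioo (-2 : ℝ) 2, g x
      = ∫ θ in Ioo (-(π/2)) (π/2), |2 * Real.cos θ| * g (2 * Real.sin θ) := by
  rw [← sin_image]
  have hderiv : ∀ θ ∈ Ioo (-(π/2)) (π/2), HasDerivWithinAt (fun θ : ℝ => 2 * Real.sin θ)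
      (2 * Real.cos θ) (Ioo (-(π/2)) (π/2)) θ := fun θ _ =>
    ((Real.hasDerivAt_sin θ).const_mul 2).hasDerivWithinAt
  have hinj : Set.InjOn (fun θ : ℝ => 2 * Real.sin θ) (Ioo (-(π/2)) (π/2)) := by
    intro a ha b hb hab
    have := Real.injOn_sin (Set.mem_Icc.mpr ⟨ha.1.le, ha.2.le⟩)
      (Set.mem_Icc.mpr ⟨hb.1.le, hb.2.le⟩) (by simpa using mul_left_cancel₀ two_ne_zero hab)
    exact this
  simpa [smul_eq_mul] using
    MeasureTheory.integral_image_eq_integral_abs_deriv_smul measurableSet_Ioo hderiv hinj g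

lemma prod_ratio (n : ℕ) :
    ∏ i ∈ Finset.range n, ((2*(i:ℝ)+1)/(2*(i:ℝ)+2)) = (Nat.centralBinom n : ℝ) / 4^n := by
  induction n with
  | zero => simp [Nat.centralBinom]
  | succ n ih =>
    rw [Finset.prod_range_succ, ih]
    have h1 : ((n:ℝ)+1) * (Nat.centralBinom (n+1) : ℝ)
        = 2*(2*(n:ℝ)+1) * (Nat.centralBinom n : ℝ) := by
      exact_mod_cast congrArg (Nat.cast : ℕ → ℝ) (Nat.succ_mul_centralBinom_succ n)
    have h2 : (4:ℝ)^n ≠ 0 := by positivity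
    have h3 : ((n:ℝ)+1) ≠ 0 := by positivity
    have h4 : (2*(n:ℝ)+2) ≠ 0 := by positivity
    field_simp
    ring_nf
    ring_nf at h1
    linear_combination (-2*(4:ℝ)^n) * h1

lemma J_eq (n : ℕ) :
    ∫ θ in (-(π/2))..(π/2), Real.sin θ ^ (2*n) = π * (Nat.centralBinom n : ℝ) / 4^n := by
  have hint : ∀ a b : ℝ, IntervalIntegrable (fun θ => Real.sin θ ^ (2*n)) volume a b :=
    fun a b => (Real.continuous_sin.pow _).intervalIntegrable a b
  have e : ∀ x : ℝ, Real.sin (-x) ^ (2*n) = Real.sin x ^ (2*n) := fun x => by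
    rw [Real.sin_neg, Even.neg_pow (even_two_mul n)]
  have h1 : (∫ θ in (0:ℝ)..(π/2), Real.sin θ ^ (2*n))
      = ∫ θ in (-(π/2))..(0:ℝ), Real.sin θ ^ (2*n) := by
    have := intervalIntegral.integral_comp_neg (a := (0:ℝ)) (b := π/2)
      (fun θ => Real.sin θ ^ (2*n))
    simpa [e] using this
  have h2 : (∫ θ in (π/2)..π, Real.sin θ ^ (2*n))
      = ∫ θ in (0:ℝ)..(π/2), Real.sin θ ^ (2*n) := by
    have := intervalIntegral.integral_comp_sub_left (a := (0:ℝ)) (b := π/2)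
      (fun θ => Real.sin θ ^ (2*n)) π
    have hh : π - π/2 = π/2 := by ring
    rw [hh, sub_zero] at this
    rw [← this]
    exact intervalIntegral.integral_congr fun x _ => by rw [Real.sin_pi_sub]
  have ha : (∫ θ in (-(π/2))..(0:ℝ), Real.sin θ ^ (2*n))
      + ∫ θ in (0:ℝ)..(π/2), Real.sin θ ^ (2*n)
      = ∫ θ in (-(π/2))..(π/2), Real.sin θ ^ (2*n) :=
    intervalIntegral.integral_add_adjacent_intervals (hint _ _) (hint _ _)
  have hb : (∫ θ in (0:ℝ)..(π/2), Real.sin θ ^ (2*n))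
      + ∫ θ in (π/2)..π, Real.sin θ ^ (2*n)
      = ∫ θ in (0:ℝ)..π, Real.sin θ ^ (2*n) :=
    intervalIntegral.integral_add_adjacent_intervals (hint _ _) (hint _ _)
  have hc : (∫ θ in (0:ℝ)..π, Real.sin θ ^ (2*n))
      = π * (Nat.centralBinom n : ℝ) / 4^n := by
    rw [integral_sin_pow_even, prod_ratio]
    ring
  linarith [ha, hb, hc, h1, h2]

lemma even_moment (k : ℕ) :
    ∫ x in (-2:ℝ)..2, x ^ (2*k) * (1 / (2*π) * (x^4 - 4*x^2 + 2) / Real.sqrt (4 - x^2))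
      = ((Nat.centralBinom (k+2) : ℝ) - 4 * (Nat.centralBinom (k+1) : ℝ)
          + 2 * (Nat.centralBinom k : ℝ)) / 2 := by
  have hpi : -(π/2) ≤ π/2 := by linarith [Real.pi_pos]
  rw [intervalIntegral.integral_of_le (by norm_num : (-2:ℝ) ≤ 2),
    MeasureTheory.integral_Ioc_eq_integral_Ioo,
    subst_key (fun x => x ^ (2*k) * (1 / (2*π) * (x^4 - 4*x^2 + 2) / Real.sqrt (4 - x^2)))]
  have hptwise : Set.EqOn
      (fun θ => |2 * Real.cos θ| * ((2*Real.sin θ) ^ (2*k)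
        * (1 / (2*π) * ((2*Real.sin θ)^4 - 4*(2*Real.sin θ)^2 + 2)
            / Real.sqrt (4 - (2*Real.sin θ)^2))))
      (fun θ => (2:ℝ)^(2*k+4)/(2*π) * Real.sin θ^(2*(k+2))
        - 4*(2:ℝ)^(2*k+2)/(2*π) * Real.sin θ^(2*(k+1))
        + 2*(2:ℝ)^(2*k)/(2*π) * Real.sin θ^(2*k))
      (Ioo (-(π/2)) (π/2)) := by
    intro θ hθ
    have hcos : 0 < Real.cos θ := Real.cos_pos_of_mem_Ioo hθ
    have hsq : Real.sqrt (4 - (2*Real.sin θ)^2) = 2 * Real.cos θ := by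
      have h : 4 - (2*Real.sin θ)^2 = (2*Real.cos θ)^2 := by
        nlinarith [Real.sin_sq_add_cos_sq θ]
      rw [h, Real.sqrt_sq (by positivity)]
    simp only [hsq, abs_of_pos (by positivity : (0:ℝ) < 2 * Real.cos θ)]
    have hπ : (π : ℝ) ≠ 0 := Real.pi_ne_zero
    field_simp
    ring
  rw [MeasureTheory.setIntegral_congr_fun measurableSet_Ioo hptwise,
    ← MeasureTheory.integral_Ioc_eq_integral_Ioo, ← intervalIntegral.integral_of_le hpi]
  have mkint : ∀ (c : ℝ) (m : ℕ), IntervalIntegrable (fun θ => c * Real.sin θ ^ m)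
      volume (-(π/2)) (π/2) :=
    fun c m => (continuous_const.mul (Real.continuous_sin.pow m)).intervalIntegrable _ _
  rw [show (fun θ => (2:ℝ)^(2*k+4)/(2*π) * Real.sin θ^(2*(k+2))
        - 4*(2:ℝ)^(2*k+2)/(2*π) * Real.sin θ^(2*(k+1))
        + 2*(2:ℝ)^(2*k)/(2*π) * Real.sin θ^(2*k))
      = (fun θ => ((2:ℝ)^(2*k+4)/(2*π) * Real.sin θ^(2*(k+2))
        - 4*(2:ℝ)^(2*k+2)/(2*π) * Real.sin θ^(2*(k+1)))
        + 2*(2:ℝ)^(2*k)/(2*π) * Real.sin θ^(2*k)) from rfl,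
    intervalIntegral.integral_add ((mkint _ _).sub (mkint _ _)) (mkint _ _),
    intervalIntegral.integral_sub (mkint _ _) (mkint _ _),
    intervalIntegral.integral_const_mul, intervalIntegral.integral_const_mul,
    intervalIntegral.integral_const_mul, J_eq, J_eq, J_eq]
  have e1 : (2:ℝ)^(2*k+4) = 16 * 2^(2*k) := by rw [pow_add]; norm_num [mul_comm]
  have e2 : (2:ℝ)^(2*k+2) = 4 * 2^(2*k) := by rw [pow_add]; norm_num [mul_comm]
  have e3 : (4:ℝ)^(k+2) = 16 * 2^(2*k) := by
    rw [show (4:ℝ) = 2^2 by norm_num, ← pow_mul, show 2*(k+2) = 2*k+4 by ring, pow_add]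
    norm_num [mul_comm]
  have e4 : (4:ℝ)^(k+1) = 4 * 2^(2*k) := by
    rw [show (4:ℝ) = 2^2 by norm_num, ← pow_mul, show 2*(k+1) = 2*k+2 by ring, pow_add]
    norm_num [mul_comm]
  have e5 : (4:ℝ)^k = 2^(2*k) := by
    rw [show (4:ℝ) = 2^2 by norm_num, ← pow_mul]
  rw [e1, e2, e3, e4, e5]
  have ha : ((2:ℝ))^(2*k) ≠ 0 := by positivity
  have hπ : (π : ℝ) ≠ 0 := Real.pi_ne_zero
  field_simp

lemma odd_moment (k : ℕ) :
    ∫ x in (-2:ℝ)..2, x ^ (2*k+1) * (1 / (2*π) * (x^4 - 4*x^2 + 2) / Real.sqrt (4 - x^2)) = 0 := by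
  set F := fun x : ℝ => x ^ (2*k+1) * (1 / (2*π) * (x^4 - 4*x^2 + 2) / Real.sqrt (4 - x^2))
    with hF
  have hodd : ∀ x, F (-x) = - F x := by
    intro x
    simp only [hF]
    have h1 : (-x : ℝ)^(2*k+1) = -(x^(2*k+1)) := Odd.neg_pow ⟨k, by ring⟩ x
    have h2 : (-x : ℝ)^2 = x^2 := by ring
    have h4 : (-x : ℝ)^4 = x^4 := by ring
    rw [h1, h2, h4]
    ring
  have hcmp := intervalIntegral.integral_comp_neg (a := (-2:ℝ)) (b := 2) F
  simp only [hodd, neg_neg] at hcmp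
  rw [intervalIntegral.integral_neg] at hcmp
  linarith

/-- For the signed measure with density `f(x) = (1/2π)(x⁴-4x²+2)/√(4-x²)` on `[-2,2]`,
the `2k`-th moment equals `∑_{p₁+p₂+p₃+p₄=k-2} (2p₁+1)Cat(p₁)Cat(p₂)Cat(p₃)Cat(p₄)`
(the empty sum `0` for `k < 2`), and all odd moments vanish. -/
theorem sigmaOne_moments :
    (∀ k : ℕ,
      ∫ x in (-2 : ℝ)..2,
          x ^ (2 * k) * (1 / (2 * π) * (x ^ 4 - 4 * x ^ 2 + 2) / Real.sqrt (4 - x ^ 2))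
        = if k < 2 then 0
          else ∑ t ∈ Finset.Nat.antidiagonalTuple 4 (k - 2),
            (2 * (t 0) + 1 : ℕ) * ∏ i, (catalan (t i) : ℝ)) ∧
    (∀ k : ℕ,
      ∫ x in (-2 : ℝ)..2,
          x ^ (2 * k + 1) * (1 / (2 * π) * (x ^ 4 - 4 * x ^ 2 + 2) / Real.sqrt (4 - x ^ 2))
        = 0) := by
  constructor
  · intro k
    rw [even_moment k]
    by_cases hk : k < 2
    · rw [if_pos hk]
      have hB0 : Nat.centralBinom 0 = 1 := by decide
      have hB1 : Nat.centralBinom 1 = 2 := by decide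
      have hB2 : Nat.centralBinom 2 = 6 := by decide
      have hB3 : Nat.centralBinom 3 = 20 := by decide
      interval_cases k <;> norm_num [hB0, hB1, hB2, hB3]
    · rw [if_neg hk]
      push_neg at hk
      obtain ⟨m, rfl⟩ : ∃ m, k = m + 2 := ⟨k - 2, by omega⟩
      rw [show m + 2 - 2 = m from by omega, Tval m]
      unfold Bc
      norm_num [show m + 2 + 2 = m + 4 from by omega, show m + 2 + 1 = m + 3 from by omega]
  · intro k
    exact odd_moment k

end Ana
end

section
/- For real x with |x| < 2, the limit as \epsilon \to 0+ of -(1/\pi) Im( (1/16) (z - sqrt(z^2-4))^4 / sqrt(z^2-4) ) evaluated at z = x + i\epsilon equals (1/(2\pi)) (x^4 - 4x^2 + 2)/sqrt(4 - x^2). -/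
open Complex Filter

/-- The branch of `√(z²-4)` that is holomorphic on the upper half-plane and behaves like `z`
at infinity, written as `√(z-2)·√(z+2)` with principal square roots. -/
noncomputable def sqBranch (z : ℂ) : ℂ := (z - 2) ^ ((1 : ℂ) / 2) * (z + 2) ^ ((1 : ℂ) / 2)

lemma base_tendsto (a : ℝ) : Tendsto (fun ε : ℝ => (a : ℂ) + ε * I) (nhdsWithin 0 (Set.Ioi 0))
    (nhds (a : ℂ)) := by
  have : Tendsto (fun ε : ℝ => (a : ℂ) + ε * I) (nhds 0) (nhds ((a:ℂ) + (0:ℝ) * I)) :=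
    (tendsto_const_nhds.add ((Complex.continuous_ofReal.tendsto 0).mul tendsto_const_nhds))
  simpa using this.mono_left nhdsWithin_le_nhds

lemma cpow_half_tendsto_neg {a : ℝ} (ha : a < 0) :
    Tendsto (fun ε : ℝ => ((a : ℂ) + ε * I) ^ ((1 : ℂ) / 2))
      (nhdsWithin 0 (Set.Ioi 0)) (nhds ((Real.sqrt (-a) : ℝ) * I)) := by
  have h1 : Tendsto (fun ε : ℝ => (a : ℂ) + ε * I) (nhdsWithin 0 (Set.Ioi 0))
      (nhdsWithin (a : ℂ) {z : ℂ | 0 ≤ z.im}) := by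
    apply tendsto_nhdsWithin_of_tendsto_nhds_of_eventually_within _ (base_tendsto a)
    filter_upwards [self_mem_nhdsWithin] with ε (hε : ε ∈ Set.Ioi (0:ℝ))
    simp [Set.mem_Ioi] at hε
    simp [Set.mem_setOf_eq, hε.le]
  have hre : ((a : ℂ)).re < 0 := by simpa using ha
  have hlog := (Complex.tendsto_log_nhdsWithin_im_nonneg_of_re_neg_of_im_zero hre
    (by simp)).comp h1
  have hexp := (Complex.continuous_exp.tendsto _).comp (hlog.mul_const ((1:ℂ)/2))
  have heq : (fun ε : ℝ => Complex.exp ((Complex.log ((a:ℂ) + ε * I)) * ((1:ℂ)/2)))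
      =ᶠ[nhdsWithin (0:ℝ) (Set.Ioi 0)]
      (fun ε : ℝ => ((a : ℂ) + ε * I) ^ ((1 : ℂ) / 2)) := by
    filter_upwards [self_mem_nhdsWithin] with ε hε
    simp only [Set.mem_Ioi] at hε
    rw [Complex.cpow_def_of_ne_zero]
    intro h
    have him : ((a:ℂ) + ε * I).im = 0 := by rw [h]; simp
    simp at him
    exact hε.ne' him
  have hval : Complex.exp ((Real.log ‖(a:ℂ)‖ + Real.pi * I) * ((1:ℂ)/2))
      = (Real.sqrt (-a) : ℝ) * I := by
    have habs : ‖(a:ℂ)‖ = -a := by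
      rw [Complex.norm_real, Real.norm_eq_abs, abs_of_neg ha]
    rw [habs, add_mul, Complex.exp_add]
    have h2 : Complex.exp ((Real.log (-a) : ℂ) * ((1:ℂ)/2)) = ((Real.sqrt (-a) : ℝ) : ℂ) := by
      have e1 : ((Real.log (-a) : ℂ)) * ((1:ℂ)/2) = ((Real.log (-a) / 2 : ℝ) : ℂ) := by
        push_cast; ring
      rw [e1, ← Complex.ofReal_exp]
      congr 1
      rw [← Real.log_sqrt (by linarith), Real.exp_log (Real.sqrt_pos.2 (by linarith))]
    have h3 : Complex.exp ((Real.pi : ℂ) * I * ((1:ℂ)/2)) = I := by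
      have e2 : (Real.pi : ℂ) * I * ((1:ℂ)/2) = ((Real.pi/2 : ℝ) : ℂ) * I := by push_cast; ring
      rw [e2, Complex.exp_mul_I]
      simp [Real.cos_pi_div_two, Real.sin_pi_div_two]
    rw [h2, h3]
  simp only [Function.comp_def] at hexp
  rw [← hval]
  exact hexp.congr' heq

lemma cpow_half_tendsto_pos {a : ℝ} (ha : 0 < a) :
    Tendsto (fun ε : ℝ => ((a : ℂ) + ε * I) ^ ((1 : ℂ) / 2))
      (nhdsWithin 0 (Set.Ioi 0)) (nhds ((Real.sqrt a : ℝ) : ℂ)) := by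
  have hc : ContinuousAt (fun z : ℂ => z ^ ((1:ℂ)/2)) (a : ℂ) :=
    continuousAt_cpow_const (Complex.mem_slitPlane_iff.2 (Or.inl (by simpa using ha)))
  have h := (hc.tendsto).comp (base_tendsto a)
  have hv : ((a : ℂ)) ^ ((1:ℂ)/2) = ((Real.sqrt a : ℝ) : ℂ) := by
    rw [Real.sqrt_eq_rpow, Complex.ofReal_cpow ha.le]
    push_cast
    ring_nf
  simp only [Function.comp_def] at h
  rwa [hv] at h

/-- For `|x| < 2`, the limit as `ε → 0⁺` of `-(1/π) Im((1/16)(z-√(z²-4))⁴/√(z²-4))` at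
`z = x + iε` equals `(1/2π)(x⁴-4x²+2)/√(4-x²)`. -/
theorem sigmaOne_density_from_stieltjes (x : ℝ) (hx : |x| < 2) :
    Tendsto (fun ε : ℝ =>
        -(1 / Real.pi) *
          ((1 / 16) * ((x + ε * I) - sqBranch (x + ε * I)) ^ 4 / sqBranch (x + ε * I)).im)
      (nhdsWithin 0 (Set.Ioi 0))
      (nhds (1 / (2 * Real.pi) * (x ^ 4 - 4 * x ^ 2 + 2) / Real.sqrt (4 - x ^ 2))) := by
  obtain ⟨hx1, hx2⟩ := abs_lt.1 hx
  set s := Real.sqrt (4 - x ^ 2) with hsdef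
  have hs2 : s ^ 2 = 4 - x ^ 2 := Real.sq_sqrt (by nlinarith)
  have hspos : 0 < s := Real.sqrt_pos.2 (by nlinarith)
  -- limit of sqBranch
  have hneg := cpow_half_tendsto_neg (a := x - 2) (by linarith)
  have hpos := cpow_half_tendsto_pos (a := x + 2) (by linarith)
  have hsq : Tendsto (fun ε : ℝ => sqBranch ((x:ℂ) + ε * I)) (nhdsWithin 0 (Set.Ioi 0))
      (nhds ((s : ℂ) * I)) := by
    have hfun : ∀ ε : ℝ, sqBranch ((x:ℂ) + ε * I)
        = (((x - 2 : ℝ) : ℂ) + ε * I) ^ ((1:ℂ)/2) * (((x + 2 : ℝ) : ℂ) + ε * I) ^ ((1:ℂ)/2) := by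
      intro ε
      unfold sqBranch
      push_cast
      ring_nf
    have hlim : ((Real.sqrt (-(x - 2)) : ℝ) : ℂ) * I * ((Real.sqrt (x + 2) : ℝ) : ℂ)
        = (s : ℂ) * I := by
      have : Real.sqrt (-(x-2)) * Real.sqrt (x + 2) = s := by
        rw [← Real.sqrt_mul (by linarith)]
        congr 1
        ring
      rw [← this]
      push_cast
      ring
    simp only [hfun]
    rw [← hlim]
    exact hneg.mul hpos
  have hz := base_tendsto x
  have hL : (s : ℂ) * I ≠ 0 := by
    simp [Complex.ext_iff, hspos.ne']
  -- limit of the complex expression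
  have hmain : Tendsto (fun ε : ℝ =>
      (1/16 : ℂ) * (((x:ℂ) + ε * I) - sqBranch ((x:ℂ) + ε * I)) ^ 4 / sqBranch ((x:ℂ) + ε * I))
      (nhdsWithin 0 (Set.Ioi 0))
      (nhds ((1/16 : ℂ) * ((x:ℂ) - (s : ℂ) * I) ^ 4 / ((s : ℂ) * I))) :=
    ((tendsto_const_nhds.mul ((hz.sub hsq).pow 4)).div hsq hL)
  have him := (Complex.continuous_im.tendsto _).comp hmain
  have hfinal := (him.const_mul (-(1/Real.pi)))
  simp only [Function.comp_def] at hfinal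
  convert hfinal using 2
  -- value computation
  have hsc : (s : ℂ) ≠ 0 := by exact_mod_cast hspos.ne'
  have h4 : ((x:ℂ) - (s:ℂ)*I)^4
      = (((x^4 - 6*x^2*s^2 + s^4 : ℝ)):ℂ) + (((4*x*s^3 - 4*x^3*s : ℝ)):ℂ) * I := by
    push_cast
    linear_combination (6*(x:ℂ)^2*(s:ℂ)^2 - (s:ℂ)^4 - 4*(x:ℂ)*(s:ℂ)^3*I + (s:ℂ)^4*I^2) *
      Complex.I_sq
  have hkey : ((1/16 : ℂ) * (((x:ℝ):ℂ) - (s:ℂ)*I)^4 / ((s:ℂ)*I)).im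
      = -(x^4 - 6*x^2*s^2 + s^4)/(16*s) := by
    rw [h4]
    rw [Complex.div_im]
    simp [Complex.normSq, Complex.mul_re, Complex.mul_im]
    simp only [← Complex.ofReal_pow, Complex.ofReal_re, Complex.ofReal_im]
    field_simp
    ring
  rw [hkey]
  have hA : x^4 - 6*x^2*s^2 + s^4 = 8*(x^4 - 4*x^2 + 2) := by
    linear_combination (s^2 + 4 - x^2 - 6*x^2) * hs2
  rw [hA]
  have hpi : Real.pi ≠ 0 := Real.pi_ne_zero
  field_simp
  ring
end

section
/- The signed measure with density g(x) = -(x^4 - 5x^2 + 4)/(2\pi sqrt(4-x^2)) on [-2,2] has total mass zero, and its Stieltjes transform equals (H(z)^4 - H(z)^2)/sqrt(z^2-4), where H(z) = (z - sqrt(z^2-4))/2. -/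
open Complex

/-- The Stieltjes transform `H(z) = (z - √(z²-4))/2` of the semicircle law. -/
noncomputable def semicircleStieltjes (z : ℂ) : ℂ := (z - sqBranch z) / 2


lemma halfpow_quadrant {u : ℂ} (hu : 0 < u.im) :
    0 < (u ^ ((1:ℂ)/2)).re ∧ 0 < (u ^ ((1:ℂ)/2)).im := by
  have hune : u ≠ 0 := by
    intro h; rw [h] at hu; simp at hu
  have harg0 : 0 < u.arg := by
    rcases lt_or_eq_of_le (Complex.arg_nonneg_iff.2 hu.le) with h | h
    · exact h
    · exfalso
      have := Complex.arg_eq_zero_iff.mp h.symm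
      exact hu.ne' this.2
  have hargpi : u.arg < Real.pi := Complex.arg_lt_pi_iff.2 (Or.inr hu.ne')
  rw [Complex.cpow_def_of_ne_zero hune]
  rw [Complex.exp_re, Complex.exp_im]
  have him : (Complex.log u * (1/2)).im = u.arg / 2 := by
    simp [Complex.log_im]; ring
  rw [him]
  have h1 : 0 < Real.cos (u.arg / 2) :=
    Real.cos_pos_of_mem_Ioo ⟨by linarith [Real.pi_pos], by linarith⟩
  have h2 : 0 < Real.sin (u.arg / 2) :=
    Real.sin_pos_of_pos_of_lt_pi (by linarith) (by linarith [Real.pi_pos])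
  constructor <;> positivity

lemma halfpow_sq {u : ℂ} (hu : u ≠ 0) : (u ^ ((1:ℂ)/2))^2 = u := by
  rw [sq, ← Complex.cpow_add _ _ hu]; norm_num

lemma sqBranch_facts {z : ℂ} (hz : 0 < z.im) :
    sqBranch z ^ 2 = z ^ 2 - 4 ∧ ‖(z - sqBranch z) / 2‖ < 1 := by
  set a := (z - 2) ^ ((1:ℂ)/2) with ha
  set b := (z + 2) ^ ((1:ℂ)/2) with hb
  have him1 : (0:ℝ) < (z - 2).im := by simpa using hz
  have him2 : (0:ℝ) < (z + 2).im := by simpa using hz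
  have hne1 : (z - 2) ≠ 0 := fun h => by rw [h] at him1; simp at him1
  have hne2 : (z + 2) ≠ 0 := fun h => by rw [h] at him2; simp at him2
  have ha2 : a ^ 2 = z - 2 := halfpow_sq hne1
  have hb2 : b ^ 2 = z + 2 := halfpow_sq hne2
  have hw2 : sqBranch z ^ 2 = z ^ 2 - 4 := by
    rw [sqBranch, mul_pow, ha2, hb2]; ring
  refine ⟨hw2, ?_⟩
  obtain ⟨hp, hq⟩ := halfpow_quadrant him1
  obtain ⟨hr, hs⟩ := halfpow_quadrant him2
  rw [← ha] at hp hq; rw [← hb] at hr hs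
  set w := sqBranch z with hwdef
  have hwab : w = a * b := rfl
  have hdiff : (a - b) ^ 2 = 2 * z - 2 * w := by
    rw [hwab]; linear_combination ha2 + hb2
  have hsum : (a + b) ^ 2 = 2 * z + 2 * w := by
    rw [hwab]; linear_combination ha2 + hb2
  have key : ‖a - b‖ < ‖a + b‖ := by
    rw [Complex.norm_def, Complex.norm_def]
    apply Real.sqrt_lt_sqrt (Complex.normSq_nonneg _)
    simp only [Complex.normSq_apply, Complex.sub_re, Complex.sub_im, Complex.add_re,
      Complex.add_im]
    nlinarith [mul_pos hp hr, mul_pos hq hs]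
  have e1 : ‖2 * z - 2 * w‖ = ‖a - b‖ ^ 2 := by
    rw [← hdiff, norm_pow]
  have e2 : ‖2 * z + 2 * w‖ = ‖a + b‖ ^ 2 := by
    rw [← hsum, norm_pow]
  have hlt' : ‖z - w‖ < ‖z + w‖ := by
    have h1 : ‖2 * z - 2 * w‖ = 2 * ‖z - w‖ := by
      rw [show (2 : ℂ) * z - 2 * w = 2 * (z - w) by ring, norm_mul]; simp
    have h2 : ‖2 * z + 2 * w‖ = 2 * ‖z + w‖ := by
      rw [show (2 : ℂ) * z + 2 * w = 2 * (z + w) by ring, norm_mul]; simp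
    nlinarith [norm_nonneg (a - b), norm_nonneg (a + b)]
  have hprod : (z - w) * (z + w) = 4 := by linear_combination -hw2
  have habs : ‖z - w‖ * ‖z + w‖ = 4 := by
    rw [← norm_mul, hprod]; simp
  have : ‖(z - w) / 2‖ = ‖z - w‖ / 2 := by simp [norm_div]
  rw [this]
  nlinarith [norm_nonneg (z - w), norm_nonneg (z + w)]


lemma density_eq {x : ℝ} (hx : x ∈ Set.uIcc (-2:ℝ) 2) :
    -(x^4 - 5*x^2 + 4) / (2*Real.pi*Real.sqrt (4-x^2))
      = (x^2-1)*Real.sqrt (4-x^2)/(2*Real.pi) := by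
  rw [Set.uIcc_of_le (by norm_num)] at hx
  have h4 : 0 ≤ 4 - x^2 := by nlinarith [hx.1, hx.2]
  set s := Real.sqrt (4 - x^2) with hs
  have hss : s^2 = 4 - x^2 := Real.sq_sqrt h4
  rcases eq_or_lt_of_le (Real.sqrt_nonneg (4 - x^2)) with h0 | h0
  · rw [← hs] at h0
    have h40 : 4 - x^2 = 0 := by rw [← hss, ← h0]; ring
    have hnum : -(x^4 - 5*x^2 + 4) = 0 := by nlinarith
    rw [hnum, ← h0]
    simp
  · rw [← hs] at h0
    have hpi := Real.pi_pos
    field_simp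
    linear_combination (-(x^2-1)) * hss

lemma mass_zero :
    (∫ x in (-2:ℝ)..2, -(x^4 - 5*x^2 + 4) / (2*Real.pi*Real.sqrt (4-x^2))) = 0 := by
  rw [intervalIntegral.integral_congr (fun x hx => density_eq hx)]
  have hpi := Real.pi_pos
  have hcont : Continuous fun x : ℝ => (x^2-1)*Real.sqrt (4-x^2)/(2*Real.pi) := by
    continuity
  have key : (∫ x in (-2:ℝ)..2, (x^2-1)*Real.sqrt (4-x^2)/(2*Real.pi))
      = (fun x : ℝ => (x^3/4 - x) * Real.sqrt (4 - x^2) / (2*Real.pi)) 2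
        - (fun x : ℝ => (x^3/4 - x) * Real.sqrt (4 - x^2) / (2*Real.pi)) (-2) := by
    refine intervalIntegral.integral_eq_sub_of_hasDeriv_right_of_le
      (f := fun x : ℝ => (x^3/4 - x) * Real.sqrt (4 - x^2) / (2*Real.pi))
      (f' := fun x : ℝ => (x^2-1)*Real.sqrt (4-x^2)/(2*Real.pi)) (by norm_num)
      (by apply Continuous.continuousOn; continuity)
      (fun x hx => ?_) (hcont.intervalIntegrable _ _)
    have hx1 : -2 < x := hx.1
    have hx2 : x < 2 := hx.2
    have h4 : 0 < 4 - x^2 := by nlinarith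
    have hinner : HasDerivAt (fun y : ℝ => 4 - y^2) (-(2*x)) x := by
      simpa using ((hasDerivAt_pow 2 x).const_sub 4)
    have hs' : HasDerivAt (fun y : ℝ => Real.sqrt (4 - y^2))
        (1 / (2 * Real.sqrt (4-x^2)) * -(2*x)) x :=
      (Real.hasDerivAt_sqrt h4.ne').comp x hinner
    have hpoly : HasDerivAt (fun y : ℝ => y^3/4 - y) (3*x^2/4 - 1) x := by
      exact (((hasDerivAt_pow 3 x).div_const 4).sub (hasDerivAt_id' (x := x))).congr_deriv (by norm_num)
    have hmul := (hpoly.mul hs').div_const (2*Real.pi)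
    have hsqrt_pos : 0 < Real.sqrt (4 - x^2) := Real.sqrt_pos.2 h4
    have hss : Real.sqrt (4-x^2)^2 = 4 - x^2 := Real.sq_sqrt h4.le
    have heq : ((3*x^2/4 - 1) * Real.sqrt (4 - x^2)
          + (x^3/4 - x) * (1 / (2 * Real.sqrt (4-x^2)) * -(2*x))) / (2*Real.pi)
        = (x^2-1)*Real.sqrt (4-x^2)/(2*Real.pi) := by
      field_simp
      linear_combination (-x^2) * hss
    rw [heq] at hmul
    exact hmul.hasDerivWithinAt
  rw [key]
  have e1 : (4 - (2:ℝ)^2) = 0 := by norm_num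
  have e2 : (4 - (-2:ℝ)^2) = 0 := by norm_num
  simp only [e1, e2, Real.sqrt_zero]
  ring

noncomputable def gC (z : ℂ) : ℝ → ℂ :=
  fun u => ((((u^2-1) * Real.sqrt (4-u^2) / (2*Real.pi)) : ℝ) : ℂ) / ((u:ℂ) - z)

lemma gC_cont (hz : 0 < z.im) : Continuous (gC z) := by
  apply Continuous.div
  · exact Complex.continuous_ofReal.comp (by continuity)
  · continuity
  · intro u h
    have : ((u:ℂ) - z).im = -z.im := by simp
    rw [h] at this
    simp at this
    exact absurd this.symm (ne_of_lt hz)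

lemma sub1 (hz : 0 < z.im) :
    (∫ x in (-2:ℝ)..2,
        Complex.ofReal (-(x ^ 4 - 5 * x ^ 2 + 4) / (2 * Real.pi * Real.sqrt (4 - x ^ 2))) /
          ((x : ℂ) - z))
      = ∫ x in (-2:ℝ)..2, gC z x := by
  apply intervalIntegral.integral_congr
  intro x hx
  show Complex.ofReal (-(x ^ 4 - 5 * x ^ 2 + 4) / (2 * Real.pi * Real.sqrt (4 - x ^ 2))) /
          ((x : ℂ) - z) = _
  unfold gC
  rw [show -(x ^ 4 - 5 * x ^ 2 + 4) / (2 * Real.pi * Real.sqrt (4 - x ^ 2))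
      = (x^2-1)*Real.sqrt (4-x^2)/(2*Real.pi) from density_eq hx]

lemma sub2 (hz : 0 < z.im) :
    (∫ x in (-2:ℝ)..2, gC z x)
      = ∫ θ in Real.pi..0, (-2 * Real.sin θ) • gC z (2 * Real.cos θ) := by
  have h := intervalIntegral.integral_comp_smul_deriv (a := Real.pi) (b := 0)
    (f := fun θ : ℝ => 2 * Real.cos θ) (f' := fun θ : ℝ => -2 * Real.sin θ) (g := gC z)
    (fun x _ => by simpa [mul_comm, neg_mul] using (Real.hasDerivAt_cos x).const_mul 2)
    (by apply Continuous.continuousOn; continuity) (gC_cont hz)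
  simp only [Function.comp, Real.cos_pi, Real.cos_zero] at h
  norm_num at h
  rw [← h, ← intervalIntegral.integral_neg]
  apply intervalIntegral.integral_congr
  intro θ _
  simp only [Complex.real_smul]
  push_cast
  ring

noncomputable def Ec (z w H : ℂ) : ℂ → ℂ := fun ζ =>
  (-2*(Complex.sin ζ - Complex.sin ζ^3/3) - z*(ζ/2 + Complex.sin ζ * Complex.cos ζ/2)
    + (5-z^2)/2 * Complex.sin ζ + z*(5-z^2)/4 * ζ)
  + (-1 + z^2*(5-z^2)/4) *
    (-(ζ + I*Complex.log (1 - H*Complex.exp (ζ*I))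
        - I*Complex.log (1 - H*Complex.exp (-(ζ*I)))) / w)

set_option maxHeartbeats 1000000 in
lemma EE_deriv (z w H : ℂ) (hzim : 0 < z.im) (hw : w ≠ 0)
    (hz2 : H^2 - z*H + 1 = 0) (hwz : w = z - 2*H) (habs : ‖H‖ < 1) (θ : ℝ) :
    HasDerivAt (fun t : ℝ => Ec z w H (t:ℂ))
      (Complex.sin (θ:ℂ)^2 * (4*Complex.cos (θ:ℂ)^2 - 1) / (2*Complex.cos (θ:ℂ) - z)) θ := by
  have hcz : 2*Complex.cos (θ:ℂ) - z ≠ 0 := by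
    intro h
    have him : (2*Complex.cos (θ:ℂ) - z).im = -z.im := by
      rw [← Complex.ofReal_cos]
      simp
    rw [h] at him
    simp at him
    exact absurd him.symm (ne_of_lt hzim)
  set u := Complex.exp ((θ:ℂ)*I) with hu
  set v := Complex.exp (-((θ:ℂ)*I)) with hv
  have hu' : u = Complex.cos (θ:ℂ) + Complex.sin (θ:ℂ) * I := by
    rw [hu, Complex.exp_mul_I]
  have hv' : v = Complex.cos (θ:ℂ) - Complex.sin (θ:ℂ) * I := by
    rw [hv, ← neg_mul, Complex.exp_mul_I, Complex.cos_neg, Complex.sin_neg]; ring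
  have habsu : ‖u‖ = 1 := by
    rw [hu']
    exact Complex.norm_cos_add_sin_mul_I _
  have habsv : ‖v‖ = 1 := by
    have huv : u * v = 1 := by rw [hu, hv, ← Complex.exp_add]; simp
    have := norm_mul u v
    rw [huv, habsu] at this; simpa using this.symm
  have hden1 : (1:ℂ) - H*u ≠ 0 := by
    intro h
    have h1 : H*u = 1 := by linear_combination -h
    have : ‖H*u‖ = 1 := by rw [h1]; simp
    rw [norm_mul, habsu, mul_one] at this
    exact absurd this (ne_of_lt habs)
  have hden2 : (1:ℂ) - H*v ≠ 0 := by
    intro h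
    have h1 : H*v = 1 := by linear_combination -h
    have : ‖H*v‖ = 1 := by rw [h1]; simp
    rw [norm_mul, habsv, mul_one] at this
    exact absurd this (ne_of_lt habs)
  have hslit1 : (1:ℂ) - H*u ∈ Complex.slitPlane := by
    have h01 : ‖-(H*u)‖ < 1 := by
      rw [norm_neg, norm_mul, habsu, mul_one]
      exact habs
    simpa [sub_eq_add_neg, add_comm] using Complex.mem_slitPlane_of_norm_lt_one h01
  have hslit2 : (1:ℂ) - H*v ∈ Complex.slitPlane := by
    have h02 : ‖-(H*v)‖ < 1 := by
      rw [norm_neg, norm_mul, habsv, mul_one]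
      exact habs
    simpa [sub_eq_add_neg, add_comm] using Complex.mem_slitPlane_of_norm_lt_one h02
  have hid : HasDerivAt (fun ζ : ℂ => ζ) 1 ((θ:ℝ):ℂ) := hasDerivAt_id _
  have hsin := Complex.hasDerivAt_sin ((θ:ℝ):ℂ)
  have hcos := Complex.hasDerivAt_cos ((θ:ℝ):ℂ)
  have hmulI : HasDerivAt (fun ζ : ℂ => ζ*I) I ((θ:ℝ):ℂ) := by
    simpa using (hasDerivAt_id ((θ:ℝ):ℂ)).mul_const I
  have hexpu : HasDerivAt (fun ζ : ℂ => Complex.exp (ζ*I)) (u*I) ((θ:ℝ):ℂ) := by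
    have := (Complex.hasDerivAt_exp ((θ:ℂ)*I)).comp ((θ:ℝ):ℂ) hmulI
    simpa [hu, Function.comp_def] using this
  have hexpv : HasDerivAt (fun ζ : ℂ => Complex.exp (-(ζ*I))) (v*(-I)) ((θ:ℝ):ℂ) := by
    have := (Complex.hasDerivAt_exp (-((θ:ℂ)*I))).comp ((θ:ℝ):ℂ) hmulI.neg
    simpa [hv, mul_comm, Function.comp_def] using this
  have hlog1 : HasDerivAt (fun ζ : ℂ => Complex.log (1 - H*Complex.exp (ζ*I)))
      ((-(H*(u*I)))/(1 - H*u)) ((θ:ℝ):ℂ) := by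
    have := HasDerivAt.clog ((hexpu.const_mul H).const_sub 1) (by simpa [hu] using hslit1)
    simpa [hu] using this
  have hlog2 : HasDerivAt (fun ζ : ℂ => Complex.log (1 - H*Complex.exp (-(ζ*I))))
      ((-(H*(v*(-I))))/(1 - H*v)) ((θ:ℝ):ℂ) := by
    have := HasDerivAt.clog ((hexpv.const_mul H).const_sub 1) (by simpa [hv] using hslit2)
    simpa [hv] using this
  have hsin3 := HasDerivAt.pow hsin 3
  have hbig := (((((hsin.sub (hsin3.div_const 3)).const_mul (-2)).sub
      (((hid.div_const 2).add ((hsin.mul hcos).div_const 2)).const_mul z)).add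
      (hsin.const_mul ((5-z^2)/2))).add (hid.const_mul (z*(5-z^2)/4))).add
      (((((hid.add (hlog1.const_mul I)).sub (hlog2.const_mul I)).neg).div_const w).const_mul
        (-1 + z^2*(5-z^2)/4))
  have hbig' := hbig.comp_ofReal
  convert hbig' using 1
  · rfl
  have hsc : Complex.sin ((θ:ℝ):ℂ)^2 + Complex.cos ((θ:ℝ):ℂ)^2 = 1 := Complex.sin_sq_add_cos_sq _
  rw [div_eq_iff hcz]
  field_simp [hden1, hden2, hw]
  linear_combination (1/8 : ℂ) * (((-192)*(z)*(H) + (-192)*(z)*(H)*(Complex.I)^2 + (192)*(z)*(H)^2*(v) + (384)*(z)*(H)^2*(v)*(Complex.I)^2 + (-144)*(z)^2*(w)*(H) + (144)*(z)^2*(w)*(H)^2*(v) + (240)*(z)^3*(H) + (240)*(z)^3*(H)*(Complex.I)^2 + (-240)*(z)^3*(H)^2*(v) + (-480)*(z)^3*(H)^2*(v)*(Complex.I)^2 + (48)*(z)^4*(w)*(H) + (-48)*(z)^4*(w)*(H)^2*(v) + (-48)*(z)^5*(H) + (-48)*(z)^5*(H)*(Complex.I)^2 + (48)*(z)^5*(H)^2*(v)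 + (96)*(z)^5*(H)^2*(v)*(Complex.I)^2 + (384)*(Complex.cos (θ:ℂ))*(H) + (384)*(Complex.cos (θ:ℂ))*(H)*(Complex.I)^2 + (-384)*(Complex.cos (θ:ℂ))*(H)^2*(v) + (-768)*(Complex.cos (θ:ℂ))*(H)^2*(v)*(Complex.I)^2 + (192)*(Complex.cos (θ:ℂ))*(z)*(w)*(H) + (-192)*(Complex.cos (θ:ℂ))*(z)*(w)*(H)^2*(v) + (-480)*(Complex.cos (θ:ℂ))*(z)^2*(H) + (-480)*(Complex.cos (θ:ℂ))*(z)^2*(H)*(Complex.I)^2 + (480)*(Complex.cos (θ:ℂ))*(z)^2*(H)^2*(v) + (960)*(Complex.cos (θ:ℂ))*(z)^2*(H)^2*(v)*(Complex.I)^2 + (96)*(Complex.cos (θ:ℂ))*(z)^4*(H) + (96)*(Complex.cos (θ:ℂ))*(z)^4*(H)*(Complex.I)^2 + (-96)*(Complex.cos (θ:ℂ))*(z)^4*(H)^2*(v) + (-192)*(Complex.cos (θ:ℂ))*(z)^4*(H)^2*(v)*(Complex.I)^2 + (192)*(Complex.cos (θ:ℂ))^2*(w)*(H) + (-192)*(Complex.cos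 (θ:ℂ))^2*(w)*(H)^2*(v) + (-96)*(Complex.cos (θ:ℂ))^2*(z)^2*(w)*(H) + (96)*(Complex.cos (θ:ℂ))^2*(z)^2*(w)*(H)^2*(v) + (-192)*(Complex.cos (θ:ℂ))^3*(z)*(w)*(H) + (192)*(Complex.cos (θ:ℂ))^3*(z)*(w)*(H)^2*(v) + (192)*(Complex.sin (θ:ℂ))^2*(w)*(H) + (-192)*(Complex.sin (θ:ℂ))^2*(w)*(H)^2*(v) + (-96)*(Complex.sin (θ:ℂ))^2*(z)^2*(w)*(H) + (96)*(Complex.sin (θ:ℂ))^2*(z)^2*(w)*(H)^2*(v) + (-192)*(Complex.sin (θ:ℂ))^2*(Complex.cos (θ:ℂ))*(z)*(w)*(H) + (192)*(Complex.sin (θ:ℂ))^2*(Complex.cos (θ:ℂ))*(z)*(w)*(H)^2*(v)) * hu' + ((-192)*(z)*(H) + (-192)*(z)*(H)*(Complex.I)^2 + (-144)*(z)^2*(w)*(H) + (240)*(z)^3*(H) + (240)*(z)^3*(H)*(Complex.I)^2 + (48)*(z)^4*(w)*(H) + (-48)*(z)^5*(H) + (-48)*(z)^5*(H)*(Complex.I)^2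 + (384)*(Complex.cos (θ:ℂ))*(H) + (384)*(Complex.cos (θ:ℂ))*(H)*(Complex.I)^2 + (192)*(Complex.cos (θ:ℂ))*(z)*(H)^2 + (384)*(Complex.cos (θ:ℂ))*(z)*(H)^2*(Complex.I)^2 + (192)*(Complex.cos (θ:ℂ))*(z)*(w)*(H) + (-480)*(Complex.cos (θ:ℂ))*(z)^2*(H) + (-480)*(Complex.cos (θ:ℂ))*(z)^2*(H)*(Complex.I)^2 + (144)*(Complex.cos (θ:ℂ))*(z)^2*(w)*(H)^2 + (-240)*(Complex.cos (θ:ℂ))*(z)^3*(H)^2 + (-480)*(Complex.cos (θ:ℂ))*(z)^3*(H)^2*(Complex.I)^2 + (96)*(Complex.cos (θ:ℂ))*(z)^4*(H) + (96)*(Complex.cos (θ:ℂ))*(z)^4*(H)*(Complex.I)^2 + (-48)*(Complex.cos (θ:ℂ))*(z)^4*(w)*(H)^2 + (48)*(Complex.cos (θ:ℂ))*(z)^5*(H)^2 + (96)*(Complex.cos (θ:ℂ))*(z)^5*(H)^2*(Complex.I)^2 + (-384)*(Complex.cos (θ:ℂ))^2*(H)^2 + (-768)*(Complex.cos (θ:ℂ))^2*(H)^2*(Complex.I)^2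 + (192)*(Complex.cos (θ:ℂ))^2*(w)*(H) + (-192)*(Complex.cos (θ:ℂ))^2*(z)*(w)*(H)^2 + (480)*(Complex.cos (θ:ℂ))^2*(z)^2*(H)^2 + (960)*(Complex.cos (θ:ℂ))^2*(z)^2*(H)^2*(Complex.I)^2 + (-96)*(Complex.cos (θ:ℂ))^2*(z)^2*(w)*(H) + (-96)*(Complex.cos (θ:ℂ))^2*(z)^4*(H)^2 + (-192)*(Complex.cos (θ:ℂ))^2*(z)^4*(H)^2*(Complex.I)^2 + (-192)*(Complex.cos (θ:ℂ))^3*(w)*(H)^2 + (-192)*(Complex.cos (θ:ℂ))^3*(z)*(w)*(H) + (96)*(Complex.cos (θ:ℂ))^3*(z)^2*(w)*(H)^2 + (192)*(Complex.cos (θ:ℂ))^4*(z)*(w)*(H)^2 + (192)*(Complex.sin (θ:ℂ))*(z)*(H)^2*(Complex.I) + (384)*(Complex.sin (θ:ℂ))*(z)*(H)^2*(Complex.I)^3 + (144)*(Complex.sin (θ:ℂ))*(z)^2*(w)*(H)^2*(Complex.I) + (-240)*(Complex.sin (θ:ℂ))*(z)^3*(H)^2*(Complex.I) + (-480)*(Complex.sin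 (θ:ℂ))*(z)^3*(H)^2*(Complex.I)^3 + (-48)*(Complex.sin (θ:ℂ))*(z)^4*(w)*(H)^2*(Complex.I) + (48)*(Complex.sin (θ:ℂ))*(z)^5*(H)^2*(Complex.I) + (96)*(Complex.sin (θ:ℂ))*(z)^5*(H)^2*(Complex.I)^3 + (-384)*(Complex.sin (θ:ℂ))*(Complex.cos (θ:ℂ))*(H)^2*(Complex.I) + (-768)*(Complex.sin (θ:ℂ))*(Complex.cos (θ:ℂ))*(H)^2*(Complex.I)^3 + (-192)*(Complex.sin (θ:ℂ))*(Complex.cos (θ:ℂ))*(z)*(w)*(H)^2*(Complex.I) + (480)*(Complex.sin (θ:ℂ))*(Complex.cos (θ:ℂ))*(z)^2*(H)^2*(Complex.I) + (960)*(Complex.sin (θ:ℂ))*(Complex.cos (θ:ℂ))*(z)^2*(H)^2*(Complex.I)^3 + (-96)*(Complex.sin (θ:ℂ))*(Complex.cos (θ:ℂ))*(z)^4*(H)^2*(Complex.I) + (-192)*(Complex.sin (θ:ℂ))*(Complex.cos (θ:ℂ))*(z)^4*(H)^2*(Complex.I)^3 + (-192)*(Complex.sin (θ:ℂ))*(Complex.cos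 (θ:ℂ))^2*(w)*(H)^2*(Complex.I) + (96)*(Complex.sin (θ:ℂ))*(Complex.cos (θ:ℂ))^2*(z)^2*(w)*(H)^2*(Complex.I) + (192)*(Complex.sin (θ:ℂ))*(Complex.cos (θ:ℂ))^3*(z)*(w)*(H)^2*(Complex.I) + (192)*(Complex.sin (θ:ℂ))^2*(w)*(H) + (-96)*(Complex.sin (θ:ℂ))^2*(z)^2*(w)*(H) + (-192)*(Complex.sin (θ:ℂ))^2*(Complex.cos (θ:ℂ))*(w)*(H)^2 + (-192)*(Complex.sin (θ:ℂ))^2*(Complex.cos (θ:ℂ))*(z)*(w)*(H) + (96)*(Complex.sin (θ:ℂ))^2*(Complex.cos (θ:ℂ))*(z)^2*(w)*(H)^2 + (192)*(Complex.sin (θ:ℂ))^2*(Complex.cos (θ:ℂ))^2*(z)*(w)*(H)^2 + (-192)*(Complex.sin (θ:ℂ))^3*(w)*(H)^2*(Complex.I) + (96)*(Complex.sin (θ:ℂ))^3*(z)^2*(w)*(H)^2*(Complex.I) + (192)*(Complex.sin (θ:ℂ))^3*(Complex.cos (θ:ℂ))*(z)*(w)*(H)^2*(Complex.I)) * hv'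 + ((-384)*(Complex.cos (θ:ℂ))*(z)*(H) + (480)*(Complex.cos (θ:ℂ))*(z)^3*(H) + (-96)*(Complex.cos (θ:ℂ))*(z)^5*(H) + (768)*(Complex.cos (θ:ℂ))^2*(H) + (384)*(Complex.cos (θ:ℂ))^2*(z)*(H)^2 + (-960)*(Complex.cos (θ:ℂ))^2*(z)^2*(H) + (-480)*(Complex.cos (θ:ℂ))^2*(z)^3*(H)^2 + (192)*(Complex.cos (θ:ℂ))^2*(z)^4*(H) + (96)*(Complex.cos (θ:ℂ))^2*(z)^5*(H)^2 + (-768)*(Complex.cos (θ:ℂ))^3*(H)^2 + (960)*(Complex.cos (θ:ℂ))^3*(z)^2*(H)^2 + (-192)*(Complex.cos (θ:ℂ))^3*(z)^4*(H)^2 + (192)*(Complex.sin (θ:ℂ))^2*(z)*(H)^2 + (-384)*(Complex.sin (θ:ℂ))^2*(z)*(H)^2*(Complex.I)^2 + (-144)*(Complex.sin (θ:ℂ))^2*(z)^2*(w)*(H)^2 + (-240)*(Complex.sin (θ:ℂ))^2*(z)^3*(H)^2 + (480)*(Complex.sin (θ:ℂ))^2*(z)^3*(H)^2*(Complex.I)^2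 + (48)*(Complex.sin (θ:ℂ))^2*(z)^4*(w)*(H)^2 + (48)*(Complex.sin (θ:ℂ))^2*(z)^5*(H)^2 + (-96)*(Complex.sin (θ:ℂ))^2*(z)^5*(H)^2*(Complex.I)^2 + (-384)*(Complex.sin (θ:ℂ))^2*(Complex.cos (θ:ℂ))*(H)^2 + (768)*(Complex.sin (θ:ℂ))^2*(Complex.cos (θ:ℂ))*(H)^2*(Complex.I)^2 + (192)*(Complex.sin (θ:ℂ))^2*(Complex.cos (θ:ℂ))*(z)*(w)*(H)^2 + (480)*(Complex.sin (θ:ℂ))^2*(Complex.cos (θ:ℂ))*(z)^2*(H)^2 + (-960)*(Complex.sin (θ:ℂ))^2*(Complex.cos (θ:ℂ))*(z)^2*(H)^2*(Complex.I)^2 + (-96)*(Complex.sin (θ:ℂ))^2*(Complex.cos (θ:ℂ))*(z)^4*(H)^2 + (192)*(Complex.sin (θ:ℂ))^2*(Complex.cos (θ:ℂ))*(z)^4*(H)^2*(Complex.I)^2 + (192)*(Complex.sin (θ:ℂ))^2*(Complex.cos (θ:ℂ))^2*(w)*(H)^2 + (-96)*(Complex.sin (θ:ℂ))^2*(Complex.cos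 (θ:ℂ))^2*(z)^2*(w)*(H)^2 + (-192)*(Complex.sin (θ:ℂ))^2*(Complex.cos (θ:ℂ))^3*(z)*(w)*(H)^2 + (192)*(Complex.sin (θ:ℂ))^4*(w)*(H)^2 + (-96)*(Complex.sin (θ:ℂ))^4*(z)^2*(w)*(H)^2 + (-192)*(Complex.sin (θ:ℂ))^4*(Complex.cos (θ:ℂ))*(z)*(w)*(H)^2) * Complex.I_sq + ((-192)*(w) + (-192)*(w)*(H)^2 + (-192)*(z)*(H)^2 + (96)*(z)^2*(w) + (240)*(z)^2*(w)*(H)^2 + (240)*(z)^3*(H)^2 + (-48)*(z)^4*(w)*(H)^2 + (-48)*(z)^5*(H)^2 + (384)*(Complex.cos (θ:ℂ))*(H)^2 + (384)*(Complex.cos (θ:ℂ))*(w)*(H) + (192)*(Complex.cos (θ:ℂ))*(z)*(w) + (-480)*(Complex.cos (θ:ℂ))*(z)^2*(H)^2 + (-192)*(Complex.cos (θ:ℂ))*(z)^2*(w)*(H) + (96)*(Complex.cos (θ:ℂ))*(z)^4*(H)^2 + (-192)*(Complex.cos (θ:ℂ))^2*(w)*(H)^2 + (-384)*(Complex.cos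 (θ:ℂ))^2*(z)*(w)*(H) + (96)*(Complex.cos (θ:ℂ))^2*(z)^2*(w)*(H)^2 + (192)*(Complex.cos (θ:ℂ))^3*(z)*(w)*(H)^2 + (-192)*(Complex.sin (θ:ℂ))^2*(w)*(H)^2 + (96)*(Complex.sin (θ:ℂ))^2*(z)^2*(w)*(H)^2 + (192)*(Complex.sin (θ:ℂ))^2*(Complex.cos (θ:ℂ))*(z)*(w)*(H)^2) * hsc + ((-192)*1 + (-192)*(H)^2 + (240)*(z)^2 + (240)*(z)^2*(H)^2 + (-48)*(z)^4 + (-48)*(z)^4*(H)^2 + (384)*(Complex.cos (θ:ℂ))*(H) + (-480)*(Complex.cos (θ:ℂ))*(z)^2*(H) + (96)*(Complex.cos (θ:ℂ))*(z)^4*(H)) * hwz + ((384)*(H) + (-480)*(z)^2*(H) + (96)*(z)^4*(H) + (-384)*(Complex.cos (θ:ℂ)) + (480)*(Complex.cos (θ:ℂ))*(z)^2 + (-96)*(Complex.cos (θ:ℂ))*(z)^4) * hz2)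


lemma key_integral (z w H : ℂ) (hzim : 0 < z.im) (hw : w ≠ 0)
    (hz2 : H^2 - z*H + 1 = 0) (hwz : w = z - 2*H) (habs : ‖H‖ < 1) :
    (∫ θ in (0:ℝ)..Real.pi,
        Complex.sin (θ:ℂ)^2 * (4*Complex.cos (θ:ℂ)^2 - 1) / (2*Complex.cos (θ:ℂ) - z))
      = -(z*(Real.pi:ℂ))/2 + z*(5-z^2)*(Real.pi:ℂ)/4 - (-1 + z^2*(5-z^2)/4)*(Real.pi:ℂ)/w := by
  have hcont : Continuous fun θ : ℝ =>
      Complex.sin (θ:ℂ)^2 * (4*Complex.cos (θ:ℂ)^2 - 1) / (2*Complex.cos (θ:ℂ) - z) := by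
    apply Continuous.div
    · continuity
    · continuity
    · intro θ h
      have him : (2*Complex.cos (θ:ℂ) - z).im = -z.im := by
        rw [← Complex.ofReal_cos]; simp
      rw [h] at him
      simp at him
      exact absurd him.symm (ne_of_lt hzim)
  rw [intervalIntegral.integral_eq_sub_of_hasDerivAt
    (fun θ _ => EE_deriv z w H hzim hw hz2 hwz habs θ) (hcont.intervalIntegrable _ _)]
  have hexp1 : Complex.exp ((Real.pi:ℂ)*I) = -1 := Complex.exp_pi_mul_I
  have hexp2 : Complex.exp (-((Real.pi:ℂ)*I)) = -1 := by
    rw [Complex.exp_neg, hexp1]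
    norm_num
  have hsinpi : Complex.sin ((Real.pi:ℝ):ℂ) = 0 := by
    rw [← Complex.ofReal_sin]; simp
  have hcospi : Complex.cos ((Real.pi:ℝ):ℂ) = -1 := by
    rw [← Complex.ofReal_cos]; simp
  unfold Ec
  push_cast
  rw [hsinpi, hcospi, hexp1, hexp2]
  simp [Complex.exp_zero]
  ring

lemma sub3 {z : ℂ} (hz : 0 < z.im) :
    (∫ θ in Real.pi..0, (-2 * Real.sin θ) • gC z (2 * Real.cos θ))
      = (2/(Real.pi:ℂ)) * ∫ θ in (0:ℝ)..Real.pi,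
          Complex.sin (θ:ℂ)^2 * (4*Complex.cos (θ:ℂ)^2 - 1) / (2*Complex.cos (θ:ℂ) - z) := by
  rw [intervalIntegral.integral_symm, ← intervalIntegral.integral_const_mul,
    ← intervalIntegral.integral_neg]
  apply intervalIntegral.integral_congr
  intro θ hθ
  rw [Set.uIcc_of_le Real.pi_pos.le] at hθ
  have hsθ : 0 ≤ Real.sin θ := Real.sin_nonneg_of_nonneg_of_le_pi hθ.1 hθ.2
  have hsq : 4 - (2*Real.cos θ)^2 = (2*Real.sin θ)^2 := by
    nlinarith [Real.sin_sq_add_cos_sq θ]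
  have hcz : 2*Complex.cos (θ:ℂ) - z ≠ 0 := by
    intro h
    have him : (2*Complex.cos (θ:ℂ) - z).im = -z.im := by
      rw [← Complex.ofReal_cos]; simp
    rw [h] at him
    simp at him
    exact absurd him.symm (ne_of_lt hz)
  have hπ : (Real.pi:ℂ) ≠ 0 := Complex.ofReal_ne_zero.mpr Real.pi_ne_zero
  show -((-2 * Real.sin θ) • gC z (2 * Real.cos θ)) = _
  unfold gC
  rw [hsq, Real.sqrt_sq (by linarith)]
  rw [Complex.real_smul]
  push_cast
  field_simp
  ring


/-- The signed measure with density `g(x) = -(x⁴-5x²+4)/(2π√(4-x²))` on `[-2,2]` has total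
mass zero, and its Stieltjes transform `∫ g(x)/(x-z) dx` equals `(H(z)⁴-H(z)²)/√(z²-4)`,
where `H(z) = (z-√(z²-4))/2`. -/
theorem sigmaHatOne_mass_and_stieltjes :
    (∫ x in (-2 : ℝ)..2, -(x ^ 4 - 5 * x ^ 2 + 4) / (2 * Real.pi * Real.sqrt (4 - x ^ 2)))
        = 0 ∧
      ∀ z : ℂ, 0 < z.im →
        (∫ x in (-2 : ℝ)..2,
            Complex.ofReal (-(x ^ 4 - 5 * x ^ 2 + 4) / (2 * Real.pi * Real.sqrt (4 - x ^ 2))) /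
              ((x : ℂ) - z))
          = (semicircleStieltjes z ^ 4 - semicircleStieltjes z ^ 2) / sqBranch z := by
  constructor
  · exact mass_zero
  · intro z hz
    obtain ⟨hw2, habs⟩ := sqBranch_facts hz
    set w := sqBranch z with hwdef
    set H := semicircleStieltjes z with hHdef
    have hHw : H = (z - w)/2 := rfl
    have hwz : w = z - 2*H := by rw [hHw]; ring
    have hz4 : z^2 - 4 ≠ 0 := by
      intro h
      have h2 : (z - 2)*(z + 2) = 0 := by linear_combination h
      rcases mul_eq_zero.mp h2 with h3 | h3
      · have : z = 2 := by linear_combination h3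
        rw [this] at hz; simp at hz
      · have : z = -2 := by linear_combination h3
        rw [this] at hz; simp at hz
    have hwne : w ≠ 0 := by
      intro h
      rw [h] at hw2
      simp at hw2
      exact hz4 hw2.symm
    have hz2 : H^2 - z*H + 1 = 0 := by rw [hHw]; linear_combination hw2/4
    rw [sub1 hz, sub2 hz, sub3 hz, key_integral z w H hz hwne hz2 hwz habs]
    have hπ : (Real.pi:ℂ) ≠ 0 := Complex.ofReal_ne_zero.mpr Real.pi_ne_zero
    rw [hHw]
    field_simp
    linear_combination ((-4:ℂ)*w^2 + 16*z*w - 28*z^2 + 32) * hw2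
end
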